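/- arXiv:1907.00919 — 4 statements merged into one kernel-verified Lean document; each statement's English description precedes it below -/
import Mathlib

section
/- If λ is a nonempty partition of n whose first row has length q and which has more than one row, then 2/n · Σ_{b∈λ} ct(b) < q − 1; equality 2/n · Σ ct(b) = q − 1 holds if and only if λ = (n) (a single row). -/
/-- A partition given as a weakly decreasing list of positive integers. -/
def IsPartition (l : List ℕ) : Prop :=
  l.Pairwise (· ≥ ·) ∧ ∀ x ∈ l, 0 < x

/-- Sum of contents `y - x` over the boxes of the Young diagram of `l`
(boxes in row `x+1` are `(x+1, y+1)` for `y < l[x]`, content `y - x`). -/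
def contentSum (l : List ℕ) : ℤ :=
  ∑ x ∈ Finset.range l.length, ∑ y ∈ Finset.range (l.getD x 0), ((y : ℤ) - (x : ℤ))

lemma twoMulInnerSum (a x : ℕ) :
    2 * ∑ y ∈ Finset.range a, ((y : ℤ) - (x : ℤ)) = a * (a - 1 - 2 * x) := by
  induction a with
  | zero => simp
  | succ k ih =>
    rw [Finset.sum_range_succ, mul_add]
    push_cast
    push_cast at ih
    nlinarith [ih]

lemma sum_getD (l : List ℕ) :
    (l.sum : ℤ) = ∑ x ∈ Finset.range l.length, (l.getD x 0 : ℤ) := by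
  induction l with
  | nil => simp
  | cons a t ih => simp [Finset.sum_range_succ', ih, add_comm]

lemma head_max (l : List ℕ) (hs : l.Pairwise (· ≥ ·)) (hne : l ≠ []) :
    ∀ b ∈ l, b ≤ l.head hne := by
  match l with
  | a :: t =>
    rw [List.pairwise_cons] at hs
    intro b hb
    rcases List.mem_cons.mp hb with rfl | hb
    · exact le_rfl
    · exact hs.1 b hb

lemma expand (l : List ℕ) :
    2 * contentSum l
      = ∑ x ∈ Finset.range l.length,
          (l.getD x 0 : ℤ) * ((l.getD x 0 : ℤ) - 1 - 2 * x) := by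
  rw [contentSum, Finset.mul_sum]
  exact Finset.sum_congr rfl fun x _ => twoMulInnerSum _ _

lemma key (l : List ℕ) (h : IsPartition l) (hne : l ≠ []) :
    2 * contentSum l ≤ ((l.head hne : ℤ) - 1) * l.sum ∧
      (1 < l.length → 2 * contentSum l < ((l.head hne : ℤ) - 1) * l.sum) := by
  set q := l.head hne with hq
  have hmem : ∀ x < l.length, l.getD x 0 ∈ l := by
    intro x hx
    rw [List.getD_eq_getElem l 0 hx]
    exact List.getElem_mem _
  have hle : ∀ x ∈ Finset.range l.length,
      (l.getD x 0 : ℤ) * ((l.getD x 0 : ℤ) - 1 - 2 * x)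
        ≤ ((q : ℤ) - 1) * (l.getD x 0 : ℤ) := by
    intro x hx
    rw [Finset.mem_range] at hx
    have h1 : (l.getD x 0 : ℤ) ≤ q := by
      exact_mod_cast head_max l h.1 hne _ (hmem x hx)
    have h2 : (0 : ℤ) ≤ (l.getD x 0 : ℤ) := Int.ofNat_nonneg _
    have h3 : (0 : ℤ) ≤ (x : ℤ) := Int.ofNat_nonneg _
    nlinarith
  have hsum : (l.sum : ℤ) = ∑ x ∈ Finset.range l.length, (l.getD x 0 : ℤ) :=
    sum_getD l
  constructor
  · rw [expand, hsum, Finset.mul_sum]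
    exact Finset.sum_le_sum hle
  · intro hlen
    rw [expand, hsum, Finset.mul_sum]
    refine Finset.sum_lt_sum hle ⟨1, Finset.mem_range.mpr hlen, ?_⟩
    have hm := hmem 1 hlen
    have hpos : 0 < l.getD 1 0 := h.2 _ hm
    have h1 : (l.getD 1 0 : ℤ) ≤ q := by
      exact_mod_cast head_max l h.1 hne _ hm
    have h2 : (1 : ℤ) ≤ (l.getD 1 0 : ℤ) := by exact_mod_cast hpos
    push_cast
    nlinarith

/-- Strict inequality when λ has more than one row; equality iff λ = (n). -/
theorem stmt2 (l : List ℕ) (h : IsPartition l) (hne : l ≠ []) (n q : ℕ)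
    (hn : l.sum = n) (hq : l.head hne = q) :
    (1 < l.length → 2 / (n : ℚ) * (contentSum l : ℚ) < (q : ℚ) - 1) ∧
    (2 / (n : ℚ) * (contentSum l : ℚ) = (q : ℚ) - 1 ↔ l = [n]) := by
  have hnpos : 0 < n := by
    have hhd := h.2 _ (List.head_mem hne)
    have hle := List.single_le_sum (l := l) (fun _ _ => Nat.zero_le _) _ (List.head_mem hne)
    omega
  have hnQ : (n : ℚ) ≠ 0 := by positivity
  have hkey := key l h hne
  rw [hq, hn] at hkey
  have hdiv : 2 / (n : ℚ) * (contentSum l : ℚ) = (2 * contentSum l : ℤ) / (n : ℚ) := by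
    push_cast; ring
  constructor
  · intro hlen
    rw [hdiv, div_lt_iff₀ (by exact_mod_cast hnpos)]
    exact_mod_cast hkey.2 hlen
  · constructor
    · intro heq
      rw [hdiv, div_eq_iff hnQ] at heq
      have heqZ : 2 * contentSum l = ((q : ℤ) - 1) * n := by exact_mod_cast heq
      have hlen : l.length = 1 := by
        by_contra hL
        have h1 : 1 ≤ l.length := List.length_pos_iff.mpr hne
        have : 1 < l.length := lt_of_le_of_ne h1 (Ne.symm hL)
        exact absurd heqZ (ne_of_lt (hkey.2 this))
      match l, hlen with
      | [a], _ =>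
        simp at hn
        rw [hn]
    · rintro rfl
      simp at hn hq
      subst hq
      rw [hdiv, div_eq_iff hnQ]
      have : 2 * contentSum [n] = ((n : ℤ) - 1) * n := by
        rw [expand]
        simp [Finset.sum_range_succ]
        nlinarith
      exact_mod_cast this
end

section
/- Let λ be a partition whose first r rows form a q × r rectangle (so λ_1 = … = λ_r = q) and which has at least one more row with λ_{r+1} < q. Then 2/|λ| · Σ_{b∈λ} ct(b) < q − r. -/
lemma inner2 (m : ℕ) (c : ℤ) :
    (∑ y ∈ Finset.range m, ((y : ℤ) - c)) * 2 = m * (m - 1) - 2 * m * c := by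
  induction m with
  | zero => simp
  | succ n ih =>
      rw [Finset.sum_range_succ, add_mul, ih]
      push_cast
      ring

lemma rect (q r : ℕ) :
    ∑ x ∈ Finset.range r, ((q : ℤ) * (q - 1) - 2 * q * x) = ((q : ℤ) - r) * (q * r) := by
  induction r with
  | zero => simp
  | succ n ih =>
      rw [Finset.sum_range_succ, ih]
      push_cast
      ring

lemma sum_getD_s3 (t : List ℕ) :
    ∑ x ∈ Finset.range t.length, (t.getD x 0 : ℤ) = (t.sum : ℤ) := by
  induction t with
  | nil => simp
  | cons a t ih =>
      rw [List.length_cons, Finset.sum_range_succ']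
      simp only [List.getD_cons_succ, List.getD_cons_zero, ih, List.sum_cons]
      push_cast
      ring

theorem key_s3 (q r : ℕ) (hq : 0 < q) (hr : 0 < r) (t : List ℕ)
    (hsort : t.Pairwise (· ≥ ·)) (hpos : ∀ x ∈ t, 0 < x) (htne : t ≠ [])
    (hlt : t.head htne < q) :
    2 * contentSum (List.replicate r q ++ t) <
      ((q : ℤ) - r) * ((List.replicate r q ++ t).sum : ℤ) := by
  set l := List.replicate r q ++ t with hl
  have hlen : l.length = r + t.length := by simp [hl]
  have hC : 2 * contentSum l =
      ∑ x ∈ Finset.range l.length,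
        (((l.getD x 0 : ℤ)) * ((l.getD x 0 : ℤ) - 1) - 2 * (l.getD x 0 : ℤ) * x) := by
    rw [mul_comm, contentSum, Finset.sum_mul]
    exact Finset.sum_congr rfl fun x _ => inner2 _ _
  have hhead : ∀ i, i < t.length → t.getD i 0 ≤ q - 1 ∧ 0 < t.getD i 0 := by
    intro i hi
    rw [List.getD_eq_getElem _ _ hi]
    constructor
    · have hle : t[i] ≤ t.head htne := by
        obtain ⟨a, t', rfl⟩ := List.exists_cons_of_ne_nil htne
        rcases Nat.eq_zero_or_pos i with h0 | h0
        · subst h0; simp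
        · have hi' : i - 1 < t'.length := by
            simp only [List.length_cons] at hi; omega
          have : t'[i-1]'hi' ≤ a := by
            rw [List.pairwise_cons] at hsort
            exact hsort.1 _ (List.getElem_mem _)
          have hg : (a :: t')[i] = t'[i-1]'hi' := by
            rw [List.getElem_cons]
            simp [Nat.pos_iff_ne_zero.mp h0]
          rw [hg]
          simpa using this
      omega
    · exact hpos _ (List.getElem_mem _)
  rw [hC, hlen, Finset.sum_range_add]
  have hsum : (l.sum : ℤ) = q * r + (t.sum : ℤ) := by
    simp [hl, List.sum_replicate, mul_comm]
  rw [hsum]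
  have h1 : ∑ x ∈ Finset.range r,
      (((l.getD x 0 : ℤ)) * ((l.getD x 0 : ℤ) - 1) - 2 * (l.getD x 0 : ℤ) * x)
      = ((q : ℤ) - r) * (q * r) := by
    rw [← rect q r]
    refine Finset.sum_congr rfl fun x hx => ?_
    have hx' : x < r := Finset.mem_range.mp hx
    have : l.getD x 0 = q := by
      rw [hl, List.getD_append _ _ _ _ (by simpa using hx'),
        List.getD_eq_getElem _ _ (by simpa using hx'), List.getElem_replicate]
    rw [this]
  have h2 : ∑ x ∈ Finset.range t.length,
      (((l.getD (r + x) 0 : ℤ)) * ((l.getD (r + x) 0 : ℤ) - 1) - 2 * (l.getD (r + x) 0 : ℤ) * (↑(r + x)))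
      < ((q : ℤ) - r) * (t.sum : ℤ) := by
    rw [← sum_getD_s3, Finset.mul_sum]
    refine Finset.sum_lt_sum_of_nonempty ?_ ?_
    · simp [Finset.nonempty_range_iff, List.length_eq_zero_iff, htne]
    · intro x hx
      have hx' : x < t.length := Finset.mem_range.mp hx
      have hg : l.getD (r + x) 0 = t.getD x 0 := by
        rw [hl, List.getD_append_right _ _ _ _ (by simp)]
        simp
      rw [hg]
      obtain ⟨hm2, hm1⟩ := hhead x hx'
      set m := t.getD x 0 with hm
      have hm1' : (1:ℤ) ≤ (m:ℤ) := by exact_mod_cast hm1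
      have hm2' : (m:ℤ) ≤ (q:ℤ) - 1 := by omega
      have h3 : (2:ℤ) ≤ (q:ℤ) + r + 2*x + 1 - m := by omega
      have h4 : (m:ℤ) * 2 ≤ m * ((q:ℤ) + r + 2*x + 1 - m) :=
        mul_le_mul_of_nonneg_left h3 (by linarith)
      push_cast
      nlinarith [h4]
  linarith

/-- Adding rows strictly below a q × r rectangle gives 2/|λ| Σ ct(b) < q - r. -/
theorem stmt3 (q r : ℕ) (hq : 0 < q) (hr : 0 < r) (t : List ℕ)
    (ht : IsPartition t) (htne : t ≠ []) (hlt : t.head htne < q) :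
    2 / ((List.replicate r q ++ t).sum : ℚ) * (contentSum (List.replicate r q ++ t) : ℚ) <
      (q : ℚ) - (r : ℚ) := by
  have hZ := key_s3 q r hq hr t ht.1 ht.2 htne hlt
  have hn : (0:ℚ) < ((List.replicate r q ++ t).sum : ℚ) := by
    have : 0 < (List.replicate r q ++ t).sum := by
      have : q ∈ List.replicate r q ++ t := by
        simp [List.mem_replicate]
        omega
      calc 0 < q := hq
        _ ≤ _ := List.single_le_sum (fun _ _ => Nat.zero_le _) _ this
    exact_mod_cast this
  rw [div_mul_eq_mul_div, div_lt_iff₀ hn]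
  calc (2:ℚ) * (contentSum (List.replicate r q ++ t) : ℚ)
      = ((2 * contentSum (List.replicate r q ++ t) : ℤ) : ℚ) := by push_cast; ring
    _ < ((((q : ℤ) - r) * ((List.replicate r q ++ t).sum : ℤ) : ℤ) : ℚ) := by
        exact_mod_cast hZ
    _ = _ := by
        rw [Int.cast_mul, Int.cast_sub, Int.cast_natCast, Int.cast_natCast, Int.cast_natCast]
end

section
/- Adding any boxes strictly below a q × r rectangle (forming a partition λ = (q^r, λ_{r+1}, …, λ_m) with q > λ_{r+1} ≥ … ≥ λ_m ≥ 1, m > r) strictly lowers the average content: the average content of boxes of λ is strictly less than the average content (q−r)/2 of the boxes of the q × r rectangle. -/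
lemma rowSum (L x : ℕ) :
    2 * ∑ y ∈ Finset.range L, ((y : ℤ) - (x : ℤ)) = L * (L - 1) - 2 * L * x := by
  induction L with
  | zero => simp
  | succ n ih =>
    rw [Finset.sum_range_succ, mul_add, ih]
    push_cast
    ring

lemma sumGetD (l : List ℕ) :
    ∑ i ∈ Finset.range l.length, ((l.getD i 0 : ℤ)) = (l.sum : ℤ) := by
  induction l with
  | nil => simp
  | cons h tl ih =>
    rw [List.length_cons, Finset.sum_range_succ']
    simp only [List.getD_cons_succ, List.getD_cons_zero, ih, List.sum_cons]
    push_cast; ring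

lemma gauss (q n : ℕ) : ∑ x ∈ Finset.range n, (2 * (q : ℤ) * x) = q * (n * (n - 1)) := by
  induction n with
  | zero => simp
  | succ n ih => rw [Finset.sum_range_succ, ih]; push_cast; ring

lemma keyInt (q r : ℕ) (hq : 0 < q) (hr : 0 < r) (t : List ℕ)
    (ht : IsPartition t) (htne : t ≠ []) (hlt : t.head htne < q) :
    2 * contentSum (List.replicate r q ++ t) <
      ((q : ℤ) - r) * (r * q + t.sum) := by
  set m := t.length with hm'
  have hm : 0 < m := List.length_pos_iff.mpr htne
  -- entries of t are positive and < q
  have hbound : ∀ i < m, 1 ≤ t.getD i 0 ∧ t.getD i 0 < q := by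
    intro i hi
    rw [List.getD_eq_getElem t 0 hi]
    constructor
    · exact ht.2 _ (List.getElem_mem hi)
    · rcases Nat.eq_zero_or_pos i with h0 | h0
      · subst h0
        have : t[0] = t.head htne := by
          cases t with
          | nil => exact absurd rfl htne
          | cons a l => rfl
        rw [this]; exact hlt
      · have := List.pairwise_iff_get.mp ht.1 ⟨0, hm⟩ ⟨i, hi⟩ h0
        have h0' : t.get ⟨0, hm⟩ = t.head htne := by
          cases t with
          | nil => exact absurd rfl htne
          | cons a l => rfl
        calc t[i] = t.get ⟨i, hi⟩ := rfl
          _ ≤ t.get ⟨0, hm⟩ := this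
          _ = t.head htne := h0'
          _ < q := hlt
  have hlen : (List.replicate r q ++ t).length = r + m := by simp [hm']
  have hget1 : ∀ x < r, (List.replicate r q ++ t).getD x 0 = q := by
    intro x hx
    rw [List.getD_append _ _ _ x (by simpa using hx), List.getD_eq_getElem _ 0 (by simpa using hx)]
    simp
  have hget2 : ∀ i, (List.replicate r q ++ t).getD (r + i) 0 = t.getD i 0 := by
    intro i
    rw [List.getD_append_right _ _ _ _ (by simp)]
    simp
  unfold contentSum
  rw [hlen, Finset.mul_sum, Finset.sum_range_add]
  have e1 : ∑ x ∈ Finset.range r,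
      2 * ∑ y ∈ Finset.range ((List.replicate r q ++ t).getD x 0), ((y : ℤ) - x) =
      ((q : ℤ) - r) * (r * q) := by
    have : ∀ x ∈ Finset.range r,
        2 * ∑ y ∈ Finset.range ((List.replicate r q ++ t).getD x 0), ((y : ℤ) - x) =
        (q : ℤ) * (q - 1) - 2 * q * x := by
      intro x hx
      rw [hget1 x (Finset.mem_range.mp hx), rowSum]
    rw [Finset.sum_congr rfl this, Finset.sum_sub_distrib, Finset.sum_const, gauss]
    simp only [Finset.card_range, nsmul_eq_mul]
    ring
  rw [e1]
  have e2 : ∑ i ∈ Finset.range m,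
      2 * ∑ y ∈ Finset.range ((List.replicate r q ++ t).getD (r + i) 0), ((y : ℤ) - (r + i : ℕ)) <
      ((q : ℤ) - r) * t.sum := by
    rw [← sumGetD, Finset.mul_sum]
    apply Finset.sum_lt_sum_of_nonempty (Finset.nonempty_range_iff.mpr (by omega))
    intro i hi
    have hi' := Finset.mem_range.mp hi
    obtain ⟨h1, h2⟩ := hbound i hi'
    rw [hget2, rowSum]
    set T : ℤ := (t.getD i 0 : ℤ) with hT
    have h1' : (1 : ℤ) ≤ T := by rw [hT]; exact_mod_cast h1
    have h2' : T ≤ (q : ℤ) - 1 := by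
      have : (t.getD i 0 : ℤ) < q := by exact_mod_cast h2
      omega
    have hr' : (1 : ℤ) ≤ r := by exact_mod_cast hr
    have hi0 : (0 : ℤ) ≤ i := Int.natCast_nonneg i
    push_cast
    nlinarith [mul_le_mul_of_nonneg_left h2' (by linarith : (0:ℤ) ≤ T),
      mul_nonneg hi0 (by linarith : (0:ℤ) ≤ T)]
  linarith

/-- Adding boxes strictly below a q × r rectangle strictly lowers the average content
below (q - r)/2. -/
theorem stmt5 (q r : ℕ) (hq : 0 < q) (hr : 0 < r) (t : List ℕ)
    (ht : IsPartition t) (htne : t ≠ []) (hlt : t.head htne < q) :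
    (contentSum (List.replicate r q ++ t) : ℚ) / ((List.replicate r q ++ t).sum : ℚ) <
      ((q : ℚ) - (r : ℚ)) / 2 := by
  have hsum : (List.replicate r q ++ t).sum = r * q + t.sum := by
    rw [List.sum_append, List.sum_replicate, smul_eq_mul]
  have hpos : (0 : ℚ) < ((List.replicate r q ++ t).sum : ℚ) := by
    rw [hsum]
    have : 0 < r * q := Nat.mul_pos hr hq
    positivity
  rw [div_lt_div_iff₀ hpos (by norm_num : (0:ℚ) < 2)]
  have key := keyInt q r hq hr t ht htne hlt
  have key' : ((2 * contentSum (List.replicate r q ++ t) : ℤ) : ℚ) <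
      ((((q : ℤ) - r) * (r * q + t.sum) : ℤ) : ℚ) := Int.cast_lt.mpr key
  rw [hsum]
  push_cast at key' ⊢
  simp only [List.map_map, Function.comp_def, Int.cast_natCast] at key'
  linarith
end

section
/- Let λ be a nonempty partition of n and let b_2 be its removable box of largest content, so ct(b_2) = q − r where λ = (q^r, λ_{r+1}, …) with λ_r = q > λ_{r+1} (or λ has exactly r rows all equal to q). If m is an integer with m = (2/n)Σ_{b∈λ} ct(b) and m ≥ ct(b_2), then λ is a rectangle and m = q − r. -/
lemma aux_count (l : List ℕ) (a : ℕ) :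
    l.count a = ∑ i ∈ Finset.range l.length, if l.getD i 0 = a then 1 else 0 := by
  induction l with
  | nil => simp
  | cons b t ih =>
    rw [List.count_cons, List.length_cons, Finset.sum_range_succ']
    simp only [List.getD_cons_succ, List.getD_cons_zero, ih]
    by_cases hb : b = a <;> simp [hb, beq_iff_eq, Ne.symm] <;> omega

lemma aux_sum (l : List ℕ) : l.sum = ∑ i ∈ Finset.range l.length, l.getD i 0 := by
  induction l with
  | nil => simp
  | cons b t ih =>
    rw [List.sum_cons, List.length_cons, Finset.sum_range_succ']
    simp [List.getD_cons_succ, List.getD_cons_zero, ih, Nat.add_comm]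

lemma aux_row (a x : ℕ) :
    2 * ∑ y ∈ Finset.range a, ((y : ℤ) - (x : ℤ)) = a * ((a : ℤ) - 1 - 2 * x) := by
  induction a with
  | zero => simp
  | succ a ih =>
    rw [Finset.sum_range_succ]
    push_cast
    push_cast at ih
    linear_combination ih

lemma aux_gauss (r : ℕ) : ∑ x ∈ Finset.range r, ((r : ℤ) - 1 - 2 * x) = 0 := by
  have h2 : ∑ x ∈ Finset.range r, (2 * (x : ℤ)) = r * (r - 1) := by
    induction r with
    | zero => simp
    | succ r ih =>
      rw [Finset.sum_range_succ, ih]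
      push_cast
      ring
  rw [Finset.sum_sub_distrib, Finset.sum_sub_distrib, h2]
  simp
  ring



/-- If m = (2/n)Σ ct(b) is an integer with m ≥ ct(b₂) = q - r (q the largest part, r the
number of parts equal to q), then λ is a rectangle and m = q - #rows. -/
theorem stmt15 (l : List ℕ) (h : IsPartition l) (hne : l ≠ []) (n : ℕ) (hn : l.sum = n)
    (m : ℤ) (hm : (m : ℚ) = 2 / (n : ℚ) * (contentSum l : ℚ))
    (hge : (l.head hne : ℤ) - (l.count (l.head hne) : ℤ) ≤ m) :
    (∀ x ∈ l, x = l.head hne) ∧ m = (l.head hne : ℤ) - (l.length : ℤ) := by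
  obtain ⟨hs, hpos⟩ := h
  set q := l.head hne with hq
  set k := l.length with hk
  set r := l.count q with hr
  have hk0 : 0 < k := List.length_pos_iff.2 hne
  -- access via getD
  have hgetD : ∀ i, (hi : i < k) → l.getD i 0 = l[i]'hi := fun i hi => List.getD_eq_getElem l 0 hi
  have hhead : q = l[0]'hk0 := List.head_eq_getElem_zero hne
  -- sorted: entries ≤ q, antitone
  have hanti : ∀ i j, i ≤ j → (hj : j < k) → l.getD j 0 ≤ l.getD i 0 := by
    intro i j hij hj
    rw [hgetD i (lt_of_le_of_lt hij hj), hgetD j hj]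
    exact hs.rel_get_of_le (a := ⟨i, lt_of_le_of_lt hij hj⟩) (b := ⟨j, hj⟩) hij
  have hleq : ∀ i, i < k → l.getD i 0 ≤ q := by
    intro i hi
    have := hanti 0 i (Nat.zero_le _) hi
    rwa [hgetD 0 hk0, ← hhead] at this
  have hmem : ∀ i, i < k → 0 < l.getD i 0 := by
    intro i hi
    rw [hgetD i hi]
    exact hpos _ (List.getElem_mem _)
  have hrk : r ≤ k := List.count_le_length
  -- count as card of filter
  have hcard : r = ((Finset.range k).filter (fun i => l.getD i 0 = q)).card := by
    rw [hr, aux_count, Finset.card_filter]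
  -- first r entries are q
  have hfirst : ∀ i, i < r → l.getD i 0 = q := by
    intro i hi
    by_contra hne'
    have hsub : (Finset.range k).filter (fun i => l.getD i 0 = q) ⊆ Finset.range i := by
      intro j hj
      simp only [Finset.mem_filter, Finset.mem_range] at hj ⊢
      by_contra hji
      push_neg at hji
      have h1 := hanti i j hji hj.1
      have h2 := hleq i (lt_of_le_of_lt hji hj.1)
      omega
    have := Finset.card_le_card hsub
    rw [← hcard, Finset.card_range] at this
    omega
  -- entries at index ≥ r are < q
  have hlater : ∀ i, r ≤ i → i < k → l.getD i 0 < q := by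
    intro i hri hi
    rcases lt_or_eq_of_le (hleq i hi) with h' | h'
    · exact h'
    · exfalso
      have hsub : Finset.range (i + 1) ⊆ (Finset.range k).filter (fun i => l.getD i 0 = q) := by
        intro j hj
        simp only [Finset.mem_range] at hj
        simp only [Finset.mem_filter, Finset.mem_range]
        refine ⟨by omega, le_antisymm (hleq j (by omega)) ?_⟩
        rw [← h']
        exact hanti j i (by omega) hi
      have := Finset.card_le_card hsub
      rw [← hcard, Finset.card_range] at this
      omega
  -- n positive
  have hn0 : 0 < n := by
    rw [← hn, aux_sum]
    calc 0 < l.getD 0 0 := hmem 0 hk0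
    _ ≤ _ := Finset.single_le_sum (f := fun i => l.getD i 0) (fun i _ => Nat.zero_le _)
        (Finset.mem_range.2 hk0)
  -- m * n = 2 * contentSum
  have hmn : m * n = 2 * contentSum l := by
    have : (m : ℚ) * n = 2 * (contentSum l : ℚ) := by
      rw [hm]; field_simp
    exact_mod_cast this
  -- n as sum
  have hnsum : (n : ℤ) = ∑ i ∈ Finset.range k, (l.getD i 0 : ℤ) := by
    rw [← hn, aux_sum]
    push_cast
    rfl
  -- 2 * contentSum as sum
  have hT : 2 * contentSum l
      = ∑ i ∈ Finset.range k, (l.getD i 0 : ℤ) * ((l.getD i 0 : ℤ) - 1 - 2 * i) := by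
    rw [contentSum, Finset.mul_sum]
    exact Finset.sum_congr rfl fun i _ => aux_row _ _
  set g : ℕ → ℤ := fun i => (l.getD i 0 : ℤ) * ((l.getD i 0 : ℤ) - 1 - 2 * i - ((q : ℤ) - r))
    with hg
  have hgsum : ∑ i ∈ Finset.range k, g i = 2 * contentSum l - n * ((q : ℤ) - r) := by
    rw [hT, hnsum, Finset.sum_mul, ← Finset.sum_sub_distrib]
    exact Finset.sum_congr rfl fun i _ => by rw [hg]; ring
  have hge0 : 0 ≤ ∑ i ∈ Finset.range k, g i := by
    rw [hgsum, ← hmn]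
    nlinarith [hge, Int.natCast_pos.2 hn0]
  -- split the sum
  have hsplit : ∑ i ∈ Finset.range r, g i + ∑ i ∈ Finset.Ico r k, g i
      = ∑ i ∈ Finset.range k, g i := Finset.sum_range_add_sum_Ico g hrk
  have hzero : ∑ i ∈ Finset.range r, g i = 0 := by
    have : ∀ i ∈ Finset.range r, g i = (q : ℤ) * ((r : ℤ) - 1 - 2 * i) := by
      intro i hi
      rw [hg]
      simp only
      rw [hfirst i (Finset.mem_range.1 hi)]
      ring
    rw [Finset.sum_congr rfl this, ← Finset.mul_sum, aux_gauss, mul_zero]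
  -- each later term is ≤ -1
  have hneg : ∀ i ∈ Finset.Ico r k, g i ≤ -1 := by
    intro i hi
    rw [Finset.mem_Ico] at hi
    have h1 : 1 ≤ (l.getD i 0 : ℤ) := by exact_mod_cast hmem i hi.2
    have h2 : (l.getD i 0 : ℤ) ≤ (q : ℤ) - 1 := by
      have := hlater i hi.1 hi.2; omega
    have h3 : (r : ℤ) ≤ i := by exact_mod_cast hi.1
    rw [hg]
    simp only
    nlinarith
  have hIco : ∑ i ∈ Finset.Ico r k, g i ≤ -((k : ℤ) - r) := by
    calc ∑ i ∈ Finset.Ico r k, g i ≤ ∑ _i ∈ Finset.Ico r k, (-1 : ℤ) :=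
          Finset.sum_le_sum hneg
      _ = -((k : ℤ) - r) := by
          rw [Finset.sum_const, Nat.card_Ico, nsmul_eq_mul]
          push_cast [Nat.cast_sub hrk]
          ring
  have hkr : k = r := by
    have h0 := hge0
    rw [← hsplit, hzero, zero_add] at h0
    have : (r : ℤ) ≤ k := by exact_mod_cast hrk
    have : (k : ℤ) = r := by linarith [le_trans h0 (le_of_eq rfl), hIco]
    exact_mod_cast this
  constructor
  · intro x hx
    obtain ⟨i, hi, rfl⟩ := List.getElem_of_mem hx
    rw [← hgetD i hi, hfirst i (by omega)]
  · have hzk : ∑ i ∈ Finset.range k, g i = 0 := by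
      rw [← hsplit, hzero, hkr, Finset.Ico_self, Finset.sum_empty, add_zero]
    rw [hgsum] at hzk
    have hC : 2 * contentSum l = (n : ℤ) * ((q : ℤ) - r) := by linarith
    rw [hC] at hmn
    have hn0' : (n : ℤ) ≠ 0 := by exact_mod_cast hn0.ne'
    have : m = (q : ℤ) - r := mul_right_cancel₀ hn0' (by linear_combination hmn)
    rw [this, hkr]
end
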